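/- Let n ≥ 1 be an integer. For every a > 0, the function y ↦ (e^{−‖y‖²/(2a)} − 1)·‖y‖^{−2n} is integrable on {y ∈ ℝ^{2n} : ‖y‖² < 2a} and ∫_{{‖y‖² < 2a}} (e^{−‖y‖²/(2a)} − 1)·‖y‖^{−2n} dλ(y) = vol(S^{2n−1}) · ∫₀¹ (e^{−u} − 1)/(2u) du; in particular this integral is independent of a. -/

import Mathlib

open MeasureTheory

/-- The volume of the unit sphere `S^{2n-1} ⊂ ℝ^{2n}`. -/
noncomputable def volSphere (n : ℕ) : ℝ := 2 * Real.pi ^ n / (Nat.factorial (n - 1))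

open Set Metric

set_option maxHeartbeats 1000000


lemma aux_integrable (n : ℕ) (hn : 1 ≤ n) (g : ℝ → ℝ) (hg : Measurable g)
    (h : IntegrableOn (fun y : ℝ => g y * y ^ (2 * n - 1)) (Set.Ioi 0)) :
    Integrable (fun x : EuclideanSpace ℝ (Fin (2 * n)) => g ‖x‖) := by
  set E := EuclideanSpace ℝ (Fin (2 * n)) with hE
  have hdim : Module.finrank ℝ E = 2 * n := finrank_euclideanSpace_fin
  haveI : Nontrivial E := Module.nontrivial_of_finrank_pos (by rw [hdim]; omega)
  have hemb := MeasurableEmbedding.subtype_coe (measurableSet_singleton (0:E)).compl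
  have e1 : (volume : Measure E) =
      Measure.map Subtype.val (volume.comap (Subtype.val : ({(0:E)}ᶜ : Set E) → E)) := by
    rw [hemb.map_comap, Subtype.range_coe, MeasureTheory.restrict_compl_singleton]
  rw [e1, hemb.integrable_map_iff]
  have key := (MeasurePreserving.integrable_comp_emb
      ((volume : Measure E).measurePreserving_homeomorphUnitSphereProd)
      (Homeomorph.measurableEmbedding _)
      (g := fun p : sphere (0:E) 1 × Ioi (0:ℝ) => g p.2.1))
  have hcomp : ((fun p : sphere (0:E) 1 × Ioi (0:ℝ) => g p.2.1) ∘ (homeomorphUnitSphereProd E))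
      = (fun x : E => g ‖x‖) ∘ Subtype.val := by
    funext x
    simp [Function.comp]
  rw [hcomp] at key
  rw [key, hdim]
  have hrad : Integrable (fun r : Ioi (0:ℝ) => g r.1) (Measure.volumeIoiPow (2*n-1)) := by
    rw [Measure.volumeIoiPow, integrable_withDensity_iff
      ((measurable_subtype_coe.pow_const _).ennreal_ofReal)
      (Filter.Eventually.of_forall fun _ => ENNReal.ofReal_lt_top)]
    have hemb2 := MeasurableEmbedding.subtype_coe (measurableSet_Ioi (a := (0:ℝ)))
    have h' : Integrable ((fun y : ℝ => g y * y ^ (2*n-1)) ∘ Subtype.val)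
        (volume.comap (Subtype.val : Ioi (0:ℝ) → ℝ)) := by
      rw [← hemb2.integrable_map_iff, hemb2.map_comap, Subtype.range_coe]
      exact h
    exact h'.congr (Filter.Eventually.of_forall fun r => by
      simp [Function.comp, ENNReal.toReal_ofReal (pow_nonneg (le_of_lt r.2) _)])
  refine (integrable_prod_iff ?_).2 ⟨Filter.Eventually.of_forall fun _ => hrad, ?_⟩
  · exact (hg.comp (measurable_subtype_coe.comp measurable_snd)).aestronglyMeasurable
  · simpa using integrable_const (μ := (volume : Measure E).toSphere) (∫ (y : ↑(Ioi (0:ℝ))), ‖g ↑y‖ ∂Measure.volumeIoiPow (2 * n - 1))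


lemma radial_subst (a : ℝ) (ha : 0 < a) :
    ∫ u in Ioc (0:ℝ) 1, (Real.exp (-u) - 1) / (2*u)
      = ∫ r in Ioo (0:ℝ) (Real.sqrt (2*a)), (Real.exp (-r^2/(2*a)) - 1) * r⁻¹ := by
  set R := Real.sqrt (2*a) with hR
  have h2a : (0:ℝ) < 2*a := by linarith
  have himg : (fun r : ℝ => r^2/(2*a)) '' Ioo 0 R = Ioo 0 1 := by
    ext u
    simp only [mem_image, mem_Ioo]
    constructor
    · rintro ⟨r, ⟨hr0, hrR⟩, rfl⟩
      have hr2 : r^2 < 2*a := (Real.lt_sqrt hr0.le).1 hrR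
      exact ⟨by positivity, by rw [div_lt_one h2a]; exact hr2⟩
    · rintro ⟨hu0, hu1⟩
      refine ⟨Real.sqrt (2*a*u), ⟨Real.sqrt_pos.2 (by positivity),
        Real.sqrt_lt_sqrt (by positivity) (by nlinarith)⟩, ?_⟩
      rw [Real.sq_sqrt (by positivity)]
      field_simp
  have hderiv : ∀ x ∈ Ioo (0:ℝ) R, HasDerivWithinAt (fun r : ℝ => r^2/(2*a)) (x/a) (Ioo 0 R) x := by
    intro x hx
    have := ((hasDerivAt_pow 2 x).div_const (2*a)).hasDerivWithinAt (s := Ioo (0:ℝ) R)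
    refine this.congr_deriv ?_
    push_cast
    ring
  have hinj : InjOn (fun r : ℝ => r^2/(2*a)) (Ioo 0 R) := by
    intro r1 h1 r2 h2 e
    simp only at e
    have e2 : r1^2 = r2^2 := by
      field_simp at e
      linarith
    have h3 : (r1 - r2) * (r1 + r2) = 0 := by nlinarith
    rcases mul_eq_zero.1 h3 with h4 | h4
    · linarith
    · have := h1.1; have := h2.1; linarith
  rw [integral_Ioc_eq_integral_Ioo, ← himg,
    integral_image_eq_integral_abs_deriv_smul measurableSet_Ioo hderiv hinj]
  apply setIntegral_congr_fun measurableSet_Ioo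
  intro r hr
  have hr0 : 0 < r := hr.1
  simp only [smul_eq_mul]
  rw [abs_of_pos (by positivity : (0:ℝ) < r/a), neg_div]
  field_simp

/-- An identity from the proof of Proposition 5.4(2). -/
theorem stmt_3 (n : ℕ) (hn : 1 ≤ n) (a : ℝ) (ha : 0 < a) :
    IntegrableOn
      (fun y : EuclideanSpace ℝ (Fin (2 * n)) =>
        (Real.exp (-‖y‖ ^ 2 / (2 * a)) - 1) * (‖y‖ ^ (2 * n))⁻¹)
      {y : EuclideanSpace ℝ (Fin (2 * n)) | ‖y‖ ^ 2 < 2 * a} ∧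
    ∫ y in {y : EuclideanSpace ℝ (Fin (2 * n)) | ‖y‖ ^ 2 < 2 * a},
        (Real.exp (-‖y‖ ^ 2 / (2 * a)) - 1) * (‖y‖ ^ (2 * n))⁻¹
      = volSphere n * ∫ u in Set.Ioc (0 : ℝ) 1, (Real.exp (-u) - 1) / (2 * u) := by
  set E := EuclideanSpace ℝ (Fin (2 * n)) with hE
  have hdim : Module.finrank ℝ E = 2 * n := finrank_euclideanSpace_fin
  haveI : Nontrivial E := Module.nontrivial_of_finrank_pos (by rw [hdim]; omega)
  set R := Real.sqrt (2*a) with hRdef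
  have h2a : (0:ℝ) < 2*a := by linarith
  have hR : 0 < R := Real.sqrt_pos.2 h2a
  set S := {y : E | ‖y‖ ^ 2 < 2 * a} with hSdef
  have hS : S = ball (0:E) R := by
    ext y
    simp [hSdef, mem_ball_zero_iff, Real.lt_sqrt (norm_nonneg y)]
    rw [hRdef, Real.lt_sqrt (norm_nonneg y)]
  have hSmeas : MeasurableSet S := hS ▸ measurableSet_ball
  set g : ℝ → ℝ := fun r => if r < R then (Real.exp (-r^2/(2*a)) - 1) * (r^(2*n))⁻¹ else 0
    with hgdef
  have hg : Measurable g := by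
    apply Measurable.ite (measurableSet_Iio (a := R)) ?_ measurable_const
    fun_prop
  -- pointwise identity on (0, R)
  have heq : ∀ r ∈ Ioo (0:ℝ) R, g r * r^(2*n-1) = (Real.exp (-r^2/(2*a)) - 1) * r⁻¹ := by
    intro r hr
    have hr0 : (0:ℝ) < r := hr.1
    have h2n : r^(2*n) = r^(2*n-1) * r := by
      rw [← pow_succ]
      congr 1
      omega
    simp only [hgdef, if_pos hr.2, h2n]
    have hrne : r ≠ 0 := hr0.ne'
    have hrpne : r^(2*n-1) ≠ 0 := pow_ne_zero _ hrne
    field_simp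
  -- exp bounds
  have hbnd : ∀ r ∈ Ioo (0:ℝ) R, ‖g r * r^(2*n-1)‖ ≤ R / (2*a) := by
    intro r hr
    have hr0 : (0:ℝ) < r := hr.1
    have hE1 : Real.exp (-r^2/(2*a)) ≤ 1 := by
      rw [Real.exp_le_one_iff]
      rw [neg_div]
      simp only [Left.neg_nonpos_iff]
      positivity
    have hE2 : 1 - r^2/(2*a) ≤ Real.exp (-r^2/(2*a)) := by
      have := Real.add_one_le_exp (-r^2/(2*a))
      rw [neg_div] at this ⊢
      linarith
    rw [heq r hr, Real.norm_eq_abs, abs_mul,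
      abs_of_nonpos (by linarith : Real.exp (-r^2/(2*a)) - 1 ≤ 0),
      abs_of_pos (inv_pos.2 hr0)]
    have step1 : -(Real.exp (-r^2/(2*a)) - 1) * r⁻¹ ≤ (r^2/(2*a)) * r⁻¹ := by
      apply mul_le_mul_of_nonneg_right _ (inv_nonneg.2 hr0.le)
      linarith
    have step2 : (r^2/(2*a)) * r⁻¹ = r / (2*a) := by
      field_simp
    have step3 : r / (2*a) ≤ R / (2*a) := by
      gcongr
      exact hr.2.le
    rw [step2] at step1
    linarith
  -- integrability on the ray
  have hIoi : IntegrableOn (fun y : ℝ => g y * y ^ (2 * n - 1)) (Set.Ioi 0) := by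
    have hmeas : AEStronglyMeasurable (fun y : ℝ => g y * y ^ (2 * n - 1)) volume :=
      (hg.mul (measurable_id.pow_const _)).aestronglyMeasurable
    have h1 : IntegrableOn (fun y : ℝ => g y * y ^ (2 * n - 1)) (Ioo 0 R) := by
      apply Measure.integrableOn_of_bounded (measure_Ioo_lt_top).ne hmeas
      exact (ae_restrict_mem measurableSet_Ioo).mono hbnd
    have h2 : IntegrableOn (fun y : ℝ => g y * y ^ (2 * n - 1)) (Ici R) := by
      apply (integrableOn_zero (s := Ici R)).congr_fun _ measurableSet_Ici
      intro r hr
      simp [hgdef, not_lt.2 (mem_Ici.1 hr)]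
    exact (h1.union h2).mono_set (fun r hr => by
      by_cases hcase : r < R
      · exact Or.inl ⟨hr, hcase⟩
      · exact Or.inr (not_lt.1 hcase))
  have hInt : Integrable (fun y : E => g ‖y‖) := aux_integrable n hn g hg hIoi
  -- indicator identity
  have hind : S.indicator
      (fun y : E => (Real.exp (-‖y‖ ^ 2 / (2 * a)) - 1) * (‖y‖ ^ (2 * n))⁻¹)
      = fun y : E => g ‖y‖ := by
    funext y
    by_cases hy : y ∈ S
    · have hy' : ‖y‖ < R := by rwa [hS, mem_ball_zero_iff] at hy
      rw [indicator_of_mem hy]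
      simp [hgdef, if_pos hy']
    · have hy' : ¬ ‖y‖ < R := by rwa [hS, mem_ball_zero_iff] at hy
      rw [indicator_of_notMem hy]
      simp [hgdef, if_neg hy']
  constructor
  · have h1 : Integrable (S.indicator
        (fun y : E => (Real.exp (-‖y‖ ^ 2 / (2 * a)) - 1) * (‖y‖ ^ (2 * n))⁻¹)) volume := by
      rw [hind]; exact hInt
    exact (integrable_indicator_iff hSmeas).1 h1
  · rw [← integral_indicator hSmeas, hind]
    rw [MeasureTheory.integral_fun_norm_addHaar volume g, hdim]
    -- radial integral
    have hradial : ∫ r in Ioi (0:ℝ), r ^ (2*n-1) • g r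
        = ∫ u in Ioc (0:ℝ) 1, (Real.exp (-u) - 1) / (2*u) := by
      rw [radial_subst a ha]
      have : ∀ r : ℝ, r ∈ Ioi (0:ℝ) →
          r ^ (2*n-1) • g r
            = (Ioo (0:ℝ) R).indicator (fun r => (Real.exp (-r^2/(2*a)) - 1) * r⁻¹) r := by
        intro r hr
        by_cases hcase : r < R
        · rw [indicator_of_mem (show r ∈ Ioo (0:ℝ) R from ⟨hr, hcase⟩), smul_eq_mul, mul_comm, heq r (⟨hr, hcase⟩ : r ∈ Ioo (0:ℝ) R)]
        · rw [indicator_of_notMem (fun hmem => hcase hmem.2), smul_eq_mul]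
          simp [hgdef, hcase]
      rw [setIntegral_congr_fun measurableSet_Ioi this,
        setIntegral_indicator measurableSet_Ioo,
        inter_eq_self_of_subset_right Ioo_subset_Ioi_self]
    rw [hradial]
    -- constant
    have hvol : ((volume (ball (0:E) 1)).toReal) = Real.pi ^ n / (Nat.factorial n) := by
      haveI : Nonempty (Fin (2*n)) := ⟨⟨0, by omega⟩⟩
      have h1 : Real.sqrt Real.pi ^ (2*n) / Real.Gamma ((2*n : ℕ) / 2 + 1)
          = Real.pi ^ n / (Nat.factorial n) := by
        rw [pow_mul, Real.sq_sqrt Real.pi_nonneg]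
        congr 1
        rw [show ((2*n : ℕ) : ℝ)/2 = (n:ℝ) from by push_cast; ring]
        exact_mod_cast Real.Gamma_nat_eq_factorial n
      rw [EuclideanSpace.volume_ball, Fintype.card_fin, h1, ENNReal.ofReal_one, one_pow,
        one_mul, ENNReal.toReal_ofReal (by positivity)]
    rw [nsmul_eq_mul, smul_eq_mul, ← mul_assoc, measureReal_def, hvol]
    congr 1
    have hfac : ((Nat.factorial n : ℝ)) = n * (Nat.factorial (n-1)) := by
      exact_mod_cast (Nat.mul_factorial_pred (by omega)).symm
    have hfacpos : (0:ℝ) < Nat.factorial (n-1) := by positivity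
    have hnpos : (0:ℝ) < n := by exact_mod_cast hn
    rw [volSphere, hfac]
    field_simp
    push_cast
    ring
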